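/- Let I ⊆ (0,π) be an open interval, let r₂ : I → ℝ be continuous and r₁ : I → ℝ differentiable with r₁'(θ) = (r₂(θ) − r₁(θ))·cot(θ) and r₂(θ) ≠ r₁(θ) for all θ ∈ I. Let a, b, c, d ∈ ℝ with a·d − b·c = 1, and assume c·r₁(θ) + d ≠ 0 and c·r₂(θ) + d ≠ 0 for all θ ∈ I. Define r̃ᵢ(θ) = (a·rᵢ(θ) + b)/(c·rᵢ(θ) + d) for i = 1, 2, and let θ̃ : I → (0,π) be differentiable. Then the transformed Codazzi–Mainardi equation r̃₁'(θ)·sin(θ̃(θ)) = (r̃₂(θ) − r̃₁(θ))·cos(θ̃(θ))·θ̃'(θ) holds for all θ ∈ I if and only if there exists a constant A ≠ 0 such that sin(θ̃(θ)) = A·sin(θ)·(c·r₁(θ) + d) for all θ ∈ I. -/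

import Mathlib

/-- Reparameterisation lemma for the SL₂(ℝ) action: the Möbius-transformed radii of
curvature satisfy the Codazzi–Mainardi equation in the new Gauss angle `θ̃` if and only
if `sin θ̃(θ) = A sin θ (c r₁(θ) + d)` for some constant `A ≠ 0`. -/
theorem stmt_12 (lo hi : ℝ) (hI : Set.Ioo lo hi ⊆ Set.Ioo 0 Real.pi)
    (r₁ r₂ : ℝ → ℝ) (hr₂ : ContinuousOn r₂ (Set.Ioo lo hi))
    (hr₁ : ∀ θ ∈ Set.Ioo lo hi, HasDerivAt r₁ ((r₂ θ - r₁ θ) * Real.cot θ) θ)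
    (hne : ∀ θ ∈ Set.Ioo lo hi, r₂ θ ≠ r₁ θ)
    (a b c d : ℝ) (habcd : a * d - b * c = 1)
    (h1 : ∀ θ ∈ Set.Ioo lo hi, c * r₁ θ + d ≠ 0)
    (h2 : ∀ θ ∈ Set.Ioo lo hi, c * r₂ θ + d ≠ 0)
    (θt : ℝ → ℝ) (hθtmem : ∀ θ ∈ Set.Ioo lo hi, θt θ ∈ Set.Ioo 0 Real.pi)
    (hθtd : ∀ θ ∈ Set.Ioo lo hi, DifferentiableAt ℝ θt θ) :
    (∀ θ ∈ Set.Ioo lo hi,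
        deriv (fun u => (a * r₁ u + b) / (c * r₁ u + d)) θ * Real.sin (θt θ) =
          ((a * r₂ θ + b) / (c * r₂ θ + d) - (a * r₁ θ + b) / (c * r₁ θ + d)) *
            Real.cos (θt θ) * deriv θt θ) ↔
      ∃ A : ℝ, A ≠ 0 ∧ ∀ θ ∈ Set.Ioo lo hi,
        Real.sin (θt θ) = A * Real.sin θ * (c * r₁ θ + d) := by
  set I := Set.Ioo lo hi with hIdef
  have hIopen : IsOpen I := isOpen_Ioo
  -- basic facts at a point
  have hsin : ∀ θ ∈ I, Real.sin θ ≠ 0 := fun θ hθ =>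
    ne_of_gt (Real.sin_pos_of_pos_of_lt_pi (hI hθ).1 (hI hθ).2)
  have hsint : ∀ θ ∈ I, Real.sin (θt θ) ≠ 0 := fun θ hθ =>
    ne_of_gt (Real.sin_pos_of_pos_of_lt_pi (hθtmem θ hθ).1 (hθtmem θ hθ).2)
  -- derivative of the Möbius transform of r₁
  have hF : ∀ θ ∈ I, HasDerivAt (fun u => (a * r₁ u + b) / (c * r₁ u + d))
      ((r₂ θ - r₁ θ) * Real.cot θ / (c * r₁ θ + d) ^ 2) θ := by
    intro θ hθ
    have hnum : HasDerivAt (fun u => a * r₁ u + b) (a * ((r₂ θ - r₁ θ) * Real.cot θ)) θ :=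
      ((hr₁ θ hθ).const_mul a).add_const b
    have hden : HasDerivAt (fun u => c * r₁ u + d) (c * ((r₂ θ - r₁ θ) * Real.cot θ)) θ :=
      ((hr₁ θ hθ).const_mul c).add_const d
    have := hnum.div hden (h1 θ hθ)
    refine this.congr_deriv ?_
    congr 1
    linear_combination ((r₂ θ - r₁ θ) * Real.cot θ) * habcd
  -- derivative of sin ∘ θt
  have hS : ∀ θ ∈ I, HasDerivAt (fun u => Real.sin (θt u))
      (Real.cos (θt θ) * deriv θt θ) θ := by
    intro θ hθ
    exact (Real.hasDerivAt_sin (θt θ)).comp θ (hθtd θ hθ).hasDerivAt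
  -- derivative of sin θ * (c r₁ + d)
  have hDen : ∀ θ ∈ I, HasDerivAt (fun u => Real.sin u * (c * r₁ u + d))
      (Real.cos θ * (c * r₂ θ + d)) θ := by
    intro θ hθ
    have hs := hsin θ hθ
    have h := (Real.hasDerivAt_sin θ).mul (((hr₁ θ hθ).const_mul c).add_const d)
    refine h.congr_deriv ?_
    rw [Real.cot_eq_cos_div_sin]
    field_simp
    ring
  -- pointwise reformulation of the CM equation
  have key : ∀ θ ∈ I,
      (deriv (fun u => (a * r₁ u + b) / (c * r₁ u + d)) θ * Real.sin (θt θ) =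
        ((a * r₂ θ + b) / (c * r₂ θ + d) - (a * r₁ θ + b) / (c * r₁ θ + d)) *
          Real.cos (θt θ) * deriv θt θ) ↔
      (Real.cos (θt θ) * deriv θt θ * (Real.sin θ * (c * r₁ θ + d)) =
        Real.sin (θt θ) * (Real.cos θ * (c * r₂ θ + d))) := by
    intro θ hθ
    have hΔ : r₂ θ - r₁ θ ≠ 0 := sub_ne_zero.mpr (hne θ hθ)
    have hk₁ := h1 θ hθ
    have hk₂ := h2 θ hθ
    have hs := hsin θ hθ
    rw [(hF θ hθ).deriv, Real.cot_eq_cos_div_sin]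
    set m : ℝ := (r₂ θ - r₁ θ) / (Real.sin θ * (c * r₁ θ + d) ^ 2 * (c * r₂ θ + d)) with hm
    have hmne : m ≠ 0 := by
      apply div_ne_zero hΔ
      exact mul_ne_zero (mul_ne_zero hs (pow_ne_zero 2 hk₁)) hk₂
    have e1 : (r₂ θ - r₁ θ) * (Real.cos θ / Real.sin θ) / (c * r₁ θ + d) ^ 2 *
        Real.sin (θt θ) = m * (Real.sin (θt θ) * (Real.cos θ * (c * r₂ θ + d))) := by
      have hk₁' : r₁ θ * c + d ≠ 0 := by rwa [mul_comm]
      have hk₂' : r₂ θ * c + d ≠ 0 := by rwa [mul_comm]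
      rw [hm]; field_simp
    have e2 : ((a * r₂ θ + b) / (c * r₂ θ + d) - (a * r₁ θ + b) / (c * r₁ θ + d)) *
        Real.cos (θt θ) * deriv θt θ =
        m * (Real.cos (θt θ) * deriv θt θ * (Real.sin θ * (c * r₁ θ + d))) := by
      rw [hm, div_sub_div _ _ hk₂ hk₁, div_mul_eq_mul_div, div_mul_eq_mul_div, div_mul_eq_mul_div, div_eq_div_iff (mul_ne_zero hk₂ hk₁) (mul_ne_zero (mul_ne_zero hs (pow_ne_zero 2 hk₁)) hk₂)]
      linear_combination (Real.cos (θt θ) * deriv θt θ * Real.sin θ * (c * r₁ θ + d) ^ 2 *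
        (c * r₂ θ + d) * (r₂ θ - r₁ θ)) * habcd
    rw [e1, e2]
    constructor
    · intro h; exact (mul_right_inj' hmne).mp h.symm
    · intro h; exact ((mul_right_inj' hmne).mpr h.symm)
  constructor
  · intro H
    rcases Set.eq_empty_or_nonempty I with he | ⟨θ₀, hθ₀⟩
    · exact ⟨1, one_ne_zero, fun θ hθ => absurd (he ▸ hθ) (Set.notMem_empty θ)⟩
    · set g : ℝ → ℝ := fun u => Real.sin (θt u) / (Real.sin u * (c * r₁ u + d)) with hg
      have hgd : ∀ θ ∈ I, HasDerivAt g 0 θ := by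
        intro θ hθ
        have h := (hS θ hθ).div (hDen θ hθ) (mul_ne_zero (hsin θ hθ) (h1 θ hθ))
        have h0 : (Real.cos (θt θ) * deriv θt θ * (Real.sin θ * (c * r₁ θ + d)) -
            Real.sin (θt θ) * (Real.cos θ * (c * r₂ θ + d))) /
            (Real.sin θ * (c * r₁ θ + d)) ^ 2 = 0 := by
          rw [(key θ hθ).mp (H θ hθ), sub_self, zero_div]
        rw [h0] at h
        exact h
      have hconst : ∀ θ ∈ I, g θ = g θ₀ := by
        intro θ hθ
        refine (convex_Ioo lo hi).is_const_of_fderivWithin_eq_zero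
          (fun x hx => ((hgd x hx).differentiableAt).differentiableWithinAt) ?_ hθ hθ₀
        intro x hx
        rw [fderivWithin_of_isOpen hIopen hx, ((hgd x hx).hasFDerivAt).fderiv]
        ext; simp
      refine ⟨g θ₀, ?_, ?_⟩
      · show Real.sin (θt θ₀) / (Real.sin θ₀ * (c * r₁ θ₀ + d)) ≠ 0
        exact div_ne_zero (hsint θ₀ hθ₀) (mul_ne_zero (hsin θ₀ hθ₀) (h1 θ₀ hθ₀))
      · intro θ hθ
        rw [← hconst θ hθ]
        show Real.sin (θt θ) =
          Real.sin (θt θ) / (Real.sin θ * (c * r₁ θ + d)) * Real.sin θ * (c * r₁ θ + d)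
        have hs := hsin θ hθ
        have hk := h1 θ hθ
        field_simp
  · rintro ⟨A, hA, hAeq⟩
    intro θ hθ
    rw [key θ hθ]
    -- differentiate the identity sin (θt u) = A * sin u * (c r₁ u + d)
    have hRd : HasDerivAt (fun u => A * (Real.sin u * (c * r₁ u + d)))
        (A * (Real.cos θ * (c * r₂ θ + d))) θ := (hDen θ hθ).const_mul A
    have hEq : (fun u => Real.sin (θt u)) =ᶠ[nhds θ]
        (fun u => A * (Real.sin u * (c * r₁ u + d))) := by
      filter_upwards [hIopen.mem_nhds hθ] with x hx
      rw [hAeq x hx]; ring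
    have hS' : HasDerivAt (fun u => Real.sin (θt u))
        (A * (Real.cos θ * (c * r₂ θ + d))) θ := hRd.congr_of_eventuallyEq hEq
    have hder : Real.cos (θt θ) * deriv θt θ = A * (Real.cos θ * (c * r₂ θ + d)) :=
      (hS θ hθ).unique hS'
    rw [hder, hAeq θ hθ]
    ring
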